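/- Let w be a bounded weight structure on a triangulated category C. Then w extends to a bounded weight structure w' on the idempotent completion C' of C, such that the canonical embedding C → C' is weight-exact, and the heart of w' is the idempotent completion of the heart of w. -/

import Mathlib

open CategoryTheory Category Limits Pretriangulated

/-- `X` is a retract of `Y`. -/
def IsRetract {C : Type*} [Category C] (X Y : C) : Prop :=
  ∃ (i : X ⟶ Y) (r : Y ⟶ X), i ≫ r = 𝟙 X

/-- A weight structure on a triangulated category `C`, given by the pair of classes
`le = C^{w≤0}` and `ge = C^{w≥0}` (Bondarko). -/
structure IsWeightStructure (C : Type*) [Category C] [HasZeroObject C] [HasShift C ℤ]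
    [Preadditive C] [∀ n : ℤ, (shiftFunctor C n).Additive] [Pretriangulated C]
    (le ge : Set C) : Prop where
  le_retract : ∀ ⦃X Y : C⦄, Y ∈ le → IsRetract X Y → X ∈ le
  ge_retract : ∀ ⦃X Y : C⦄, Y ∈ ge → IsRetract X Y → X ∈ ge
  le_shift : ∀ ⦃X : C⦄, X ∈ le → X⟦(1 : ℤ)⟧ ∈ le
  ge_shift : ∀ ⦃X : C⦄, X ∈ ge → X⟦(-1 : ℤ)⟧ ∈ ge
  orth : ∀ ⦃X Y : C⦄, X ∈ ge → Y ∈ le → ∀ f : X ⟶ Y⟦(1 : ℤ)⟧, f = 0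
  decomp : ∀ M : C, ∃ (A B : C) (_ : A ∈ le) (_ : B ∈ ge)
    (f : M ⟶ A) (g : A ⟶ B) (h : B ⟶ M⟦(1 : ℤ)⟧), Triangle.mk f g h ∈ distTriang C
open ZeroObject

section Helpers
variable {C : Type*} [Category C]

lemma IsRetract.trans' {X Y Z : C} (h₁ : IsRetract X Y) (h₂ : IsRetract Y Z) : IsRetract X Z := by
  obtain ⟨i₁, r₁, h₁⟩ := h₁
  obtain ⟨i₂, r₂, h₂⟩ := h₂
  exact ⟨i₁ ≫ i₂, r₂ ≫ r₁, by rw [assoc, ← assoc i₂, h₂, id_comp, h₁]⟩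

lemma IsRetract.of_iso {X Y Z : C} (h : IsRetract X Y) (e : Y ≅ Z) : IsRetract X Z := by
  obtain ⟨i, r, hir⟩ := h
  exact ⟨i ≫ e.hom, e.inv ≫ r, by rw [assoc, ← assoc e.hom, e.hom_inv_id, id_comp, hir]⟩

lemma isRetract_of_iso {X Y : C} (e : X ≅ Y) : IsRetract X Y :=
  ⟨e.hom, e.inv, e.hom_inv_id⟩

lemma IsRetract.map {D : Type*} [Category D] (F : C ⥤ D) {X Y : C} (h : IsRetract X Y) :
    IsRetract (F.obj X) (F.obj Y) := by
  obtain ⟨i, r, hir⟩ := h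
  exact ⟨F.map i, F.map r, by rw [← F.map_comp, hir, F.map_id]⟩

end Helpers

section WS
variable {C : Type*} [Category C] [HasZeroObject C] [HasShift C ℤ]
  [Preadditive C] [∀ n : ℤ, (shiftFunctor C n).Additive] [Pretriangulated C]
variable {le ge : Set C} (w : IsWeightStructure C le ge)
include w
set_option linter.unusedSectionVars false

namespace IsWeightStructure

lemma le_iso {X Y : C} (e : X ≅ Y) (h : Y ∈ le) : X ∈ le :=
  w.le_retract h ⟨e.hom, e.inv, e.hom_inv_id⟩

lemma ge_iso {X Y : C} (e : X ≅ Y) (h : Y ∈ ge) : X ∈ ge :=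
  w.ge_retract h ⟨e.hom, e.inv, e.hom_inv_id⟩

/-- transport of `le`-membership along iterated shifts -/
lemma le_shift_shift {X : C} (i j k : ℤ) (h : i + j = k) (hX : X⟦k⟧ ∈ le) : X⟦i⟧⟦j⟧ ∈ le :=
  w.le_iso (((shiftFunctorAdd' C i j k h).app X).symm) hX

lemma le_unshift_shift {X : C} (i j k : ℤ) (h : i + j = k) (hX : X⟦i⟧⟦j⟧ ∈ le) : X⟦k⟧ ∈ le :=
  w.le_iso ((shiftFunctorAdd' C i j k h).app X) hX

lemma ge_shift_shift {X : C} (i j k : ℤ) (h : i + j = k) (hX : X⟦k⟧ ∈ ge) : X⟦i⟧⟦j⟧ ∈ ge :=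
  w.ge_iso (((shiftFunctorAdd' C i j k h).app X).symm) hX

lemma ge_unshift_shift {X : C} (i j k : ℤ) (h : i + j = k) (hX : X⟦i⟧⟦j⟧ ∈ ge) : X⟦k⟧ ∈ ge :=
  w.ge_iso ((shiftFunctorAdd' C i j k h).app X) hX

lemma le_shift_zero {X : C} (h : X ∈ le) : X⟦(0:ℤ)⟧ ∈ le :=
  w.le_iso ((shiftFunctorZero C ℤ).app X) h

lemma le_of_shift_zero {X : C} (h : X⟦(0:ℤ)⟧ ∈ le) : X ∈ le :=
  w.le_iso ((shiftFunctorZero C ℤ).app X).symm h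

lemma ge_shift_zero {X : C} (h : X ∈ ge) : X⟦(0:ℤ)⟧ ∈ ge :=
  w.ge_iso ((shiftFunctorZero C ℤ).app X) h

lemma ge_of_shift_zero {X : C} (h : X⟦(0:ℤ)⟧ ∈ ge) : X ∈ ge :=
  w.ge_iso ((shiftFunctorZero C ℤ).app X).symm h

lemma le_mono {m n : ℤ} (h : m ≤ n) {X : C} (hX : X⟦m⟧ ∈ le) : X⟦n⟧ ∈ le := by
  have key : ∀ k : ℕ, X⟦m + (k : ℤ)⟧ ∈ le := by
    intro k
    induction k with
    | zero => simpa using hX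
    | succ k ih =>
        have h1 : X⟦m + (k:ℤ)⟧⟦(1:ℤ)⟧ ∈ le := w.le_shift ih
        have := w.le_unshift_shift (m + (k:ℤ)) 1 (m + ((k:ℕ)+1:ℤ)) (by ring) h1
        convert this using 3 <;> (push_cast; ring)
  have := key (n - m).toNat
  rwa [show m + ((n - m).toNat : ℤ) = n by omega] at this

lemma ge_anti {m n : ℤ} (h : m ≤ n) {X : C} (hX : X⟦n⟧ ∈ ge) : X⟦m⟧ ∈ ge := by
  have key : ∀ k : ℕ, X⟦n - (k : ℤ)⟧ ∈ ge := by
    intro k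
    induction k with
    | zero => simpa using hX
    | succ k ih =>
        have h1 : X⟦n - (k:ℤ)⟧⟦(-1:ℤ)⟧ ∈ ge := w.ge_shift ih
        have := w.ge_unshift_shift (n - (k:ℤ)) (-1) (n - ((k:ℕ)+1:ℤ)) (by ring) h1
        convert this using 3 <;> (push_cast; ring)
  have := key (n - m).toNat
  rwa [show n - ((n - m).toNat : ℤ) = m by omega] at this

lemma le_shift_of_nonneg {X : C} (h : X ∈ le) {n : ℤ} (hn : 0 ≤ n) : X⟦n⟧ ∈ le :=
  w.le_mono hn (w.le_shift_zero h)

lemma ge_shift_of_nonpos {X : C} (h : X ∈ ge) {n : ℤ} (hn : n ≤ 0) : X⟦n⟧ ∈ ge :=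
  w.ge_anti hn (w.ge_shift_zero h)

/-- generalized orthogonality: if `X` has weights `≥ n` and `Y` has weights `≤ n - 1`
then every map `X ⟶ Y` vanishes. -/
lemma orth' {X Y : C} (n : ℤ) (hX : X⟦n⟧ ∈ ge) (hY : Y⟦n-1⟧ ∈ le) (f : X ⟶ Y) : f = 0 := by
  have h0 := w.orth hX hY (f⟦n⟧' ≫ ((shiftFunctorAdd' C (n-1) 1 n (by ring)).app Y).hom)
  have h1 : f⟦n⟧' = 0 := by
    rw [← cancel_mono ((shiftFunctorAdd' C (n-1) 1 n (by ring)).app Y).hom, h0, zero_comp]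
  exact (shiftFunctor C n).map_injective (by rw [h1, Functor.map_zero])

lemma zero_mem_le : (0 : C) ∈ le := by
  obtain ⟨A, B, hA, hB, f, g, h, hd⟩ := w.decomp (0 : C)
  exact w.le_retract hA ⟨0, 0, by simp⟩

lemma zero_mem_ge : (0 : C) ∈ ge := by
  obtain ⟨A, B, hA, hB, f, g, h, hd⟩ := w.decomp (0 : C)
  exact w.ge_retract hB ⟨0, 0, by simp⟩


/-- extension-closedness of `le` (level 0) -/
lemma le_ext₀ (T : Triangle C) (hT : T ∈ distTriang C)
    (h₁ : T.obj₁ ∈ le) (h₃ : T.obj₃ ∈ le) : T.obj₂ ∈ le := by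
  obtain ⟨A, B, hA, hB, f, g, h, hd⟩ := w.decomp T.obj₂
  have hd' := inv_rot_of_distTriang _ hd
  set TD := (Triangle.mk f g h).invRotate with hTD
  -- TD : B⟦-1⟧ ⟶ T.obj₂ ⟶ A ⟶ ...
  have hBm : (TD.obj₁)⟦(1:ℤ)⟧ ∈ ge := by
    dsimp [TD, Triangle.invRotate]
    exact w.ge_shift_shift (-1) 1 0 (by ring) (w.ge_shift_zero hB)
  have hm : TD.mor₁ = 0 := by
    have h1 : TD.mor₁ ≫ T.mor₂ = 0 :=
      w.orth' 1 hBm (by simpa using w.le_shift_zero h₃) _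
    obtain ⟨m', hm'⟩ := Triangle.coyoneda_exact₂ T hT _ h1
    rw [hm', w.orth' 1 hBm (by simpa using w.le_shift_zero h₁) m', zero_comp]; rfl
  obtain ⟨r, hr⟩ := Triangle.yoneda_exact₂ TD hd' (𝟙 _) (by rw [hm, zero_comp])
  exact w.le_retract hA ⟨TD.mor₂, r, hr.symm⟩

/-- extension-closedness of `ge` (level 0) -/
lemma ge_ext₀ (T : Triangle C) (hT : T ∈ distTriang C)
    (h₁ : T.obj₁ ∈ ge) (h₃ : T.obj₃ ∈ ge) : T.obj₂ ∈ ge := by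
  obtain ⟨A, B, hA, hB, f, g, h, hd⟩ := w.decomp (T.obj₂⟦(-1:ℤ)⟧)
  have hds := Pretriangulated.Triangle.shift_distinguished _ hd 1
  set TDs := (CategoryTheory.shiftFunctor (Triangle C) (1:ℤ)).obj (Triangle.mk f g h) with hTDs
  -- TDs : T.obj₂⟦-1⟧⟦1⟧ ⟶ A⟦1⟧ ⟶ B⟦1⟧ ⟶ ...
  have e : T.obj₂ ≅ TDs.obj₁ := ((shiftFunctorCompIsoId C (-1) (1:ℤ) (by ring)).app T.obj₂).symm
  set TY := Triangle.mk (e.hom ≫ TDs.mor₁) TDs.mor₂ (TDs.mor₃ ≫ (e.inv)⟦(1:ℤ)⟧') with hTY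
  have hTYd : TY ∈ distTriang C := by
    refine isomorphic_distinguished _ hds _ ?_
    refine Triangle.isoMk _ _ e (Iso.refl _) (Iso.refl _) (by simp [TY]; exact comp_id _)
      (by simp [TY]; exact (comp_id _).trans (id_comp _).symm) ?_
    dsimp [TY]
    simp
    exact (by simp : (TDs.mor₃ ≫ (e.inv)⟦(1:ℤ)⟧') ≫ (e.hom)⟦(1:ℤ)⟧' = TDs.mor₃).trans (id_comp TDs.mor₃).symm
  have hAle : (TY.obj₂)⟦(-1:ℤ)⟧ ∈ le := by
    dsimp [TY, TDs]
    exact w.le_shift_shift 1 (-1) 0 (by ring) (w.le_shift_zero hA)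
  have hq : TY.mor₁ = 0 := by
    have h1 : T.mor₁ ≫ TY.mor₁ = 0 :=
      w.orth' 0 (w.ge_shift_zero h₁) (by simpa using hAle) _
    obtain ⟨q', hq'⟩ := Triangle.yoneda_exact₂ T hT _ h1
    rw [hq', w.orth' 0 (w.ge_shift_zero h₃) (by simpa using hAle) q', comp_zero]; rfl
  -- now T.obj₂ is a retract of TY.obj₃⟦-1⟧
  have hd2 := inv_rot_of_distTriang _ hTYd
  obtain ⟨r, hr⟩ := Triangle.coyoneda_exact₂ TY.invRotate hd2 (𝟙 TY.obj₁)
    (by dsimp [Triangle.invRotate]; exact (id_comp TY.mor₁).trans hq)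
  have hBge : (TY.invRotate).obj₁ ∈ ge := by
    dsimp [TY, TDs, Triangle.invRotate]
    exact w.ge_shift_shift 1 (-1) 0 (by ring) (w.ge_shift_zero hB)
  exact w.ge_retract hBge ⟨r, TY.invRotate.mor₁, hr.symm⟩

/-- extension-closedness, general level -/
lemma le_ext (T : Triangle C) (hT : T ∈ distTriang C) (n : ℤ)
    (h₁ : T.obj₁⟦n⟧ ∈ le) (h₃ : T.obj₃⟦n⟧ ∈ le) : T.obj₂⟦n⟧ ∈ le :=
  w.le_ext₀ _ (Pretriangulated.Triangle.shift_distinguished T hT n) h₁ h₃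

lemma ge_ext (T : Triangle C) (hT : T ∈ distTriang C) (n : ℤ)
    (h₁ : T.obj₁⟦n⟧ ∈ ge) (h₃ : T.obj₃⟦n⟧ ∈ ge) : T.obj₂⟦n⟧ ∈ ge :=
  w.ge_ext₀ _ (Pretriangulated.Triangle.shift_distinguished T hT n) h₁ h₃


/-- bounded weight decomposition at level `0` -/
lemma decomp0 (M : C) (a b : ℤ) (ha : a ≤ 0) (hb : 1 ≤ b)
    (hMa : M⟦a⟧ ∈ ge) (hMb : M⟦b⟧ ∈ le) :
    ∃ (P A : C) (f : P ⟶ M) (g : M ⟶ A) (h : A ⟶ P⟦(1:ℤ)⟧),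
      (Triangle.mk f g h ∈ distTriang C) ∧
      P⟦(1:ℤ)⟧ ∈ ge ∧ P⟦b⟧ ∈ le ∧ A ∈ le ∧ A⟦a⟧ ∈ ge := by
  obtain ⟨A, B, hA, hB, f₀, g₀, h₀, hd⟩ := w.decomp M
  set T₀ := Triangle.mk f₀ g₀ h₀ with hT₀
  set T₃ := T₀.invRotate with hT₃
  have hd₃ : T₃ ∈ distTriang C := inv_rot_of_distTriang _ hd
  refine ⟨B⟦(-1:ℤ)⟧, A, T₃.mor₁, T₃.mor₂, T₃.mor₃, hd₃, ?_, ?_, hA, ?_⟩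
  · exact w.ge_shift_shift (-1) 1 0 (by ring) (w.ge_shift_zero hB)
  · -- P⟦b⟧ ∈ le via extension in T₃.invRotate = (A⟦-1⟧, B⟦-1⟧, M)
    have h1 : (T₃.invRotate).obj₁⟦b⟧ ∈ le := by
      dsimp [T₃, T₀, Triangle.invRotate]
      exact w.le_shift_shift (-1) b (b-1) (by ring)
        (w.le_mono (by omega : (0:ℤ) ≤ b - 1) (w.le_shift_zero hA))
    have h3 : (T₃.invRotate).obj₃⟦b⟧ ∈ le := hMb
    exact w.le_ext _ (inv_rot_of_distTriang _ hd₃) b h1 h3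
  · -- A⟦a⟧ ∈ ge via extension in T₀ = (M, A, B)
    exact w.ge_ext T₀ hd a hMa (w.ge_anti ha (w.ge_shift_zero hB))


/-- direct sums exist (constructed as a cone over a zero map), with all the
biproduct identities, and they respect weight bounds. -/
lemma sum_exists (P Q : C) :
    ∃ (S : C) (inP : P ⟶ S) (outQ : S ⟶ Q) (retP : S ⟶ P) (secQ : Q ⟶ S),
      inP ≫ retP = 𝟙 P ∧ secQ ≫ outQ = 𝟙 Q ∧ inP ≫ outQ = 0 ∧ secQ ≫ retP = 0 ∧
      retP ≫ inP + outQ ≫ secQ = 𝟙 S ∧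
      (∀ n : ℤ, P⟦n⟧ ∈ le → Q⟦n⟧ ∈ le → S⟦n⟧ ∈ le) ∧
      (∀ n : ℤ, P⟦n⟧ ∈ ge → Q⟦n⟧ ∈ ge → S⟦n⟧ ∈ ge) := by
  obtain ⟨S, inP, h', hT⟩ := distinguished_cocone_triangle (0 : Q⟦(-1:ℤ)⟧ ⟶ P)
  have e : (Q⟦(-1:ℤ)⟧)⟦(1:ℤ)⟧ ≅ Q := (shiftFunctorCompIsoId C (-1) (1:ℤ) (by ring)).app Q
  obtain ⟨retP, hretP⟩ : ∃ r : S ⟶ P, inP ≫ r = 𝟙 P := by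
    obtain ⟨r, hr⟩ := Triangle.yoneda_exact₂ _ hT (𝟙 P) (by simp; exact zero_comp)
    exact ⟨r, hr.symm⟩
  have hz : inP ≫ h' = 0 := comp_distTriang_mor_zero₂₃ _ hT
  obtain ⟨η₀, hη₀⟩ : ∃ y : (Q⟦(-1:ℤ)⟧)⟦(1:ℤ)⟧ ⟶ S, 𝟙 S - retP ≫ inP = h' ≫ y := by
    obtain ⟨y, hy⟩ := Triangle.yoneda_exact₃ _ hT (𝟙 S - retP ≫ inP)
      (by show inP ≫ (𝟙 S - retP ≫ inP) = 0
          rw [Preadditive.comp_sub, comp_id, ← assoc, hretP, id_comp, sub_self])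
    exact ⟨y, hy⟩
  obtain ⟨sec₀, hsec₀⟩ : ∃ u : (Q⟦(-1:ℤ)⟧)⟦(1:ℤ)⟧ ⟶ S,
      𝟙 ((Q⟦(-1:ℤ)⟧)⟦(1:ℤ)⟧) = u ≫ h' := by
    obtain ⟨u, hu⟩ := Triangle.coyoneda_exact₁ _ hT (𝟙 ((Q⟦(-1:ℤ)⟧)⟦(1:ℤ)⟧)) (by simp; exact (id_comp _).trans (Functor.map_zero _ _ _))
    exact ⟨u, hu⟩
  -- abbreviations (plain morphisms)
  have hζr : (𝟙 S - retP ≫ inP) ≫ retP = 0 := by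
    rw [Preadditive.sub_comp, id_comp, assoc, hretP, comp_id, sub_self]
  have hη₀r : h' ≫ η₀ ≫ retP = 0 := by
    rw [reassoc_of% hη₀.symm]
    exact hζr
  have hzc : inP ≫ h' ≫ e.hom = 0 := by rw [← assoc, hz, zero_comp]
  have hsh : sec₀ ≫ h' ≫ e.hom = e.hom := by rw [← assoc, ← hsec₀, id_comp]
  refine ⟨S, inP, h' ≫ e.hom, retP, (e.inv ≫ η₀) - (e.inv ≫ η₀) ≫ retP ≫ inP,
    hretP, ?_, hzc, ?_, ?_, ?_, ?_⟩
  · -- secQ ≫ outQ = 𝟙 Q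
    have u2 : ((e.inv ≫ η₀) ≫ retP ≫ inP) ≫ (h' ≫ e.hom) = 0 := by
      simp only [assoc]
      rw [hzc]
      simp only [comp_zero]
    -- u1 : (e.inv ≫ η₀) ≫ (h' ≫ e.hom) = 𝟙 Q
    have h1 : h' ≫ e.hom ≫ e.inv ≫ η₀ ≫ h' ≫ e.hom = h' ≫ e.hom := by
      rw [Iso.hom_inv_id_assoc, reassoc_of% hη₀.symm, Preadditive.sub_comp, id_comp]
      rw [assoc, hzc]
      simp only [comp_zero, sub_zero]
    have u1 : (e.inv ≫ η₀) ≫ (h' ≫ e.hom) = 𝟙 Q := by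
      have step : e.inv ≫ sec₀ ≫ h' ≫ e.hom = 𝟙 Q := by rw [hsh, e.inv_hom_id]
      calc (e.inv ≫ η₀) ≫ (h' ≫ e.hom)
          = (e.inv ≫ sec₀ ≫ h' ≫ e.hom) ≫ (e.inv ≫ η₀) ≫ (h' ≫ e.hom) := by
            rw [step, id_comp]
        _ = e.inv ≫ sec₀ ≫ (h' ≫ e.hom ≫ e.inv ≫ η₀ ≫ h' ≫ e.hom) := by
            simp only [assoc]
        _ = e.inv ≫ sec₀ ≫ h' ≫ e.hom := by rw [h1]
        _ = 𝟙 Q := step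
    rw [Preadditive.sub_comp, u1, u2, sub_zero]
  · -- secQ ≫ retP = 0
    rw [Preadditive.sub_comp]
    simp only [assoc]
    rw [hretP]
    simp only [comp_id, sub_self]
  · -- total identity
    have t1 : (h' ≫ e.hom) ≫ (e.inv ≫ η₀) = h' ≫ η₀ := by
      simp only [assoc, Iso.hom_inv_id_assoc]
    have t2 : (h' ≫ e.hom) ≫ ((e.inv ≫ η₀) ≫ retP ≫ inP) = 0 := by
      simp only [assoc, Iso.hom_inv_id_assoc]
      rw [← assoc, ← assoc, assoc h' η₀ retP, hη₀r, zero_comp]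
    rw [Preadditive.comp_sub, t1, t2, sub_zero, ← hη₀]
    abel
  · intro n h1 h2
    have h3 : ((Triangle.mk (0 : Q⟦(-1:ℤ)⟧ ⟶ P) inP h').rotate.obj₃)⟦n⟧ ∈ le := by
      dsimp [Triangle.rotate]
      exact w.le_shift_shift 1 n (1+n) (by ring)
        (w.le_shift_shift (-1) (1+n) n (by ring) h2)
    exact w.le_ext _ (rot_of_distTriang _ hT) n h1 h3
  · intro n h1 h2
    have h3 : ((Triangle.mk (0 : Q⟦(-1:ℤ)⟧ ⟶ P) inP h').rotate.obj₃)⟦n⟧ ∈ ge := by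
      dsimp [Triangle.rotate]
      exact w.ge_shift_shift 1 n (1+n) (by ring)
        (w.ge_shift_shift (-1) (1+n) n (by ring) h2)
    exact w.ge_ext _ (rot_of_distTriang _ hT) n h1 h3

end IsWeightStructure
end WS

section Transfer

variable {C : Type*} [Category C] [HasZeroObject C] [HasShift C ℤ]
  [Preadditive C] [∀ n : ℤ, (shiftFunctor C n).Additive] [Pretriangulated C]
variable {C' : Type*} [Category C'] [HasZeroObject C'] [HasShift C' ℤ]
  [Preadditive C'] [∀ n : ℤ, (shiftFunctor C' n).Additive] [Pretriangulated C']
variable {le ge : Set C} (w : IsWeightStructure C le ge)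
variable (ι : C ⥤ C') [ι.CommShift ℤ] [ι.IsTriangulated] [ι.Full] [ι.Faithful]
include w

set_option linter.unusedSectionVars false

/-- morphisms between images of `ι` vanish under the weight-orthogonality -/
lemma ι_hom_zero {X Y : C} (n : ℤ) (hX : X⟦n⟧ ∈ ge) (hY : Y⟦n-1⟧ ∈ le)
    (f : ι.obj X ⟶ ι.obj Y) : f = 0 := by
  have h := w.orth' n hX hY (ι.preimage f)
  rw [← ι.map_preimage f, h, ι.map_zero]

lemma isRetract_ι_shift {Y : C'} {X : C} (n : ℤ) (h : IsRetract Y (ι.obj X)) :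
    IsRetract (Y⟦n⟧) (ι.obj (X⟦n⟧)) :=
  (h.map (shiftFunctor C' n)).of_iso ((ι.commShiftIso n).app X).symm


/-- The shrinking lemma: if `W` is a retract of `ι.obj K` and receives no maps from
objects of weights `≥ 1`, then `W` is a retract of the image of an object of
weights `≤ 0` (the lower weight bound `κ` being preserved). -/
lemma shrink (κ : ℤ) (hκ : κ ≤ 0) :
    ∀ (j : ℕ) (K : C), K⟦(j:ℤ)⟧ ∈ le → K⟦κ⟧ ∈ ge →
    ∀ (W : C') (wi : W ⟶ ι.obj K) (wr : ι.obj K ⟶ W), wi ≫ wr = 𝟙 W →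
    (∀ (R₀ : C), R₀⟦(1:ℤ)⟧ ∈ ge → ∀ t : ι.obj R₀ ⟶ W, t = 0) →
    ∃ Q : C, Q ∈ le ∧ Q⟦κ⟧ ∈ ge ∧ IsRetract W (ι.obj Q) := by
  intro j
  induction j with
  | zero =>
      intro K hKle hKge W wi wr hw horth
      exact ⟨K, w.le_of_shift_zero (by simpa using hKle), hKge, ⟨wi, wr, hw⟩⟩
  | succ j ih =>
      intro K hKle hKge W wi wr hw horth
      have hKle' : K⟦(j:ℤ)+1⟧ ∈ le := by
        rw [show (j:ℤ)+1 = ((j+1:ℕ):ℤ) by push_cast; ring]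
        exact hKle
      obtain ⟨P, A, f, g, h, hTK, hP1, hPb, hA0, hAκ⟩ :=
        w.decomp0 K κ ((j:ℤ)+1) hκ (by omega) hKge hKle'
      have hc₀ : ι.map f ≫ wr = 0 := horth P hP1 _
      obtain ⟨Q₂, u₂, v₂, hT₁⟩ := distinguished_cocone_triangle (ι.map f ≫ wr)
      obtain ⟨ρ', hρ'⟩ : ∃ r : Q₂ ⟶ W, u₂ ≫ r = 𝟙 W := by
        obtain ⟨r, hr⟩ := Triangle.yoneda_exact₂ _ hT₁ (𝟙 W)
          (by show (ι.map f ≫ wr) ≫ 𝟙 W = 0; rw [comp_id]; exact hc₀)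
        exact ⟨r, hr.symm⟩
      obtain ⟨η₂, hη₂⟩ : ∃ y : (ι.obj P)⟦(1:ℤ)⟧ ⟶ Q₂, 𝟙 Q₂ - ρ' ≫ u₂ = v₂ ≫ y := by
        obtain ⟨y, hy⟩ := Triangle.yoneda_exact₃ _ hT₁ (𝟙 Q₂ - ρ' ≫ u₂)
          (by show u₂ ≫ _ = 0
              rw [Preadditive.comp_sub, comp_id, ← assoc, hρ', id_comp, sub_self])
        exact ⟨y, hy⟩
      obtain ⟨τ₂, hτ₂⟩ : ∃ τ : ι.obj A ⟶ Q₂, ι.map g ≫ τ = wr ≫ u₂ := by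
        obtain ⟨c, hc, _⟩ := complete_distinguished_triangle_morphism
          (ι.mapTriangle.obj (Triangle.mk f g h)) _ (ι.map_distinguished _ hTK) hT₁
          (𝟙 (ι.obj P)) wr (by exact (id_comp (ι.map f ≫ wr)).symm)
        exact ⟨c, hc⟩
      obtain ⟨S, inA, outP, retA, secP, hIR, hSO, hIO, hSR, hTot, hSle, hSge⟩ :=
        w.sum_exists A (P⟦(1:ℤ)⟧)
      have isoP : ι.obj (P⟦(1:ℤ)⟧) ≅ (ι.obj P)⟦(1:ℤ)⟧ := (ι.commShiftIso (1:ℤ)).app P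
      have hcomp : ((ρ' ≫ wi ≫ ι.map g) ≫ ι.map inA + v₂ ≫ isoP.inv ≫ ι.map secP) ≫
          (ι.map retA ≫ τ₂ + ι.map outP ≫ isoP.hom ≫ η₂) = 𝟙 Q₂ := by
        rw [Preadditive.add_comp, Preadditive.comp_add, Preadditive.comp_add]
        simp only [assoc]
        have T11 : ρ' ≫ wi ≫ ι.map g ≫ ι.map inA ≫ ι.map retA ≫ τ₂ = ρ' ≫ u₂ := by
          rw [← ι.map_comp_assoc inA retA, hIR, ι.map_id, id_comp, hτ₂, reassoc_of% hw]
        have T12 : ρ' ≫ wi ≫ ι.map g ≫ ι.map inA ≫ ι.map outP ≫ isoP.hom ≫ η₂ = 0 := by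
          rw [← ι.map_comp_assoc inA outP, hIO, ι.map_zero, zero_comp]
          simp only [comp_zero]
        have T21 : v₂ ≫ isoP.inv ≫ ι.map secP ≫ ι.map retA ≫ τ₂ = 0 := by
          rw [← ι.map_comp_assoc secP retA, hSR, ι.map_zero, zero_comp]
          simp only [comp_zero]
        have T22 : v₂ ≫ isoP.inv ≫ ι.map secP ≫ ι.map outP ≫ isoP.hom ≫ η₂ =
            𝟙 Q₂ - ρ' ≫ u₂ := by
          rw [← ι.map_comp_assoc secP outP, hSO, ι.map_id, id_comp, Iso.inv_hom_id_assoc]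
          exact hη₂.symm
        rw [T11, T12, T21, T22]
        abel
      have hSle' : S⟦(j:ℤ)⟧ ∈ le := by
        refine hSle (j:ℤ) (w.le_mono (by omega : (0:ℤ) ≤ (j:ℤ)) (w.le_shift_zero hA0)) ?_
        exact w.le_shift_shift 1 (j:ℤ) (1+(j:ℤ)) (by ring)
          (w.le_mono (by omega : (j:ℤ)+1 ≤ 1+(j:ℤ)) hPb)
      have hSge' : S⟦κ⟧ ∈ ge := by
        refine hSge κ hAκ ?_
        exact w.ge_shift_shift 1 κ (1+κ) (by ring) (w.ge_anti (by omega : 1+κ ≤ 1) hP1)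
      refine ih S hSle' hSge' W
        (u₂ ≫ ((ρ' ≫ wi ≫ ι.map g) ≫ ι.map inA + v₂ ≫ isoP.inv ≫ ι.map secP))
        ((ι.map retA ≫ τ₂ + ι.map outP ≫ isoP.hom ≫ η₂) ≫ ρ') ?_ horth
      rw [assoc, ← assoc _ _ ρ', hcomp, id_comp, hρ']


/-- The master decomposition lemma: any two-sided retract of `ι.obj M`, for `M` of
weights in `[a, b]`, admits a weight decomposition in `C'`, with tightly controlled
pieces, and with the two homological side conditions needed for the induction. -/
lemma master :
    ∀ (k : ℕ) (a b : ℤ), 1 - a ≤ (k:ℤ) → 1 ≤ b → ∀ (M : C), M⟦a⟧ ∈ ge → M⟦b⟧ ∈ le →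
    ∀ (X' : C') (xi : X' ⟶ ι.obj M) (xr : ι.obj M ⟶ X'), xi ≫ xr = 𝟙 X' →
    ∃ (R W : C') (c : R ⟶ X') (u : X' ⟶ W) (v : W ⟶ R⟦(1:ℤ)⟧),
      (Triangle.mk c u v ∈ distTriang C') ∧
      (∃ G : C, G⟦(1:ℤ)⟧ ∈ ge ∧ G⟦b⟧ ∈ le ∧ IsRetract R (ι.obj G)) ∧
      (∃ Q : C, Q ∈ le ∧ IsRetract W (ι.obj Q)) ∧
      (∀ (R₀ : C), R₀⟦(1:ℤ)⟧ ∈ ge → ∀ t : ι.obj R₀ ⟶ X', ∃ t', t = t' ≫ c) ∧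
      (∀ (R₁ : C), R₁⟦(2:ℤ)⟧ ∈ ge → ∀ t' : ι.obj R₁ ⟶ R, t' ≫ c = 0 → t' = 0) := by
  have base : ∀ (a b : ℤ), 1 ≤ a → 1 ≤ b → ∀ (M : C), M⟦a⟧ ∈ ge → M⟦b⟧ ∈ le →
      ∀ (X' : C') (xi : X' ⟶ ι.obj M) (xr : ι.obj M ⟶ X'), xi ≫ xr = 𝟙 X' →
      ∃ (R W : C') (c : R ⟶ X') (u : X' ⟶ W) (v : W ⟶ R⟦(1:ℤ)⟧),
        (Triangle.mk c u v ∈ distTriang C') ∧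
        (∃ G : C, G⟦(1:ℤ)⟧ ∈ ge ∧ G⟦b⟧ ∈ le ∧ IsRetract R (ι.obj G)) ∧
        (∃ Q : C, Q ∈ le ∧ IsRetract W (ι.obj Q)) ∧
        (∀ (R₀ : C), R₀⟦(1:ℤ)⟧ ∈ ge → ∀ t : ι.obj R₀ ⟶ X', ∃ t', t = t' ≫ c) ∧
        (∀ (R₁ : C), R₁⟦(2:ℤ)⟧ ∈ ge → ∀ t' : ι.obj R₁ ⟶ R, t' ≫ c = 0 → t' = 0) := by
    intro a b ha hb M hMa hMb X' xi xr hx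
    refine ⟨X', 0, 𝟙 X', 0, 0, contractible_distinguished X',
      ⟨M, w.ge_anti ha hMa, hMb, ⟨xi, xr, hx⟩⟩,
      ⟨0, w.zero_mem_le, ⟨0, 0, by simp⟩⟩, ?_, ?_⟩
    · intro R₀ _ t
      exact ⟨t, (comp_id t).symm⟩
    · intro R₁ _ t' ht'
      rwa [comp_id] at ht'
  intro k
  induction k with
  | zero =>
      intro a b hak hb M hMa hMb X' xi xr hx
      exact base a b (by omega) hb M hMa hMb X' xi xr hx
  | succ k ih =>
      intro a b hak hb M hMa hMb X' xi xr hx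
      by_cases ha : 1 ≤ a
      · exact base a b ha hb M hMa hMb X' xi xr hx
      -- inductive step : a ≤ 0
      obtain ⟨P, A, f, g, hh, hTM, hP1, hPb, hA0, hAa⟩ :=
        w.decomp0 M a b (by omega) hb hMa hMb
      -- the fiber of X' ⟶ ι.obj A
      obtain ⟨F, wF, δ, hTF⟩ := distinguished_cocone_triangle₁ (xi ≫ ι.map g)
      -- σ : comparison F ⟶ ι.obj P
      obtain ⟨σ, hσ₁⟩ : ∃ σ : F ⟶ ι.obj P, wF ≫ xi = σ ≫ ι.map f := by
        obtain ⟨s, hs, _⟩ := complete_distinguished_triangle_morphism₁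
          (Triangle.mk wF (xi ≫ ι.map g) δ) (ι.mapTriangle.obj (Triangle.mk f g hh))
          hTF (ι.map_distinguished _ hTM) xi (𝟙 (ι.obj A)) (by exact comp_id (xi ≫ ι.map g))
        exact ⟨s, hs⟩
      -- the lift echk of the idempotent on the `A`-side
      obtain ⟨echk, hechk⟩ : ∃ echk : A ⟶ A, ι.preimage (xr ≫ xi) ≫ g = g ≫ echk := by
        obtain ⟨y, hy⟩ := Triangle.yoneda_exact₂ _ hTM (ι.preimage (xr ≫ xi) ≫ g)
          (by
            show f ≫ ι.preimage (xr ≫ xi) ≫ g = 0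
            exact w.orth' 1 hP1 (by
              rw [show (1:ℤ)-1 = 0 by norm_num]
              exact w.le_shift_zero hA0) _)
        exact ⟨y, hy⟩
      -- π : comparison ι.obj P ⟶ F
      obtain ⟨π, hπ₁⟩ : ∃ π : ι.obj P ⟶ F, ι.map f ≫ xr = π ≫ wF := by
        obtain ⟨s, hs, _⟩ := complete_distinguished_triangle_morphism₁
          (ι.mapTriangle.obj (Triangle.mk f g hh)) (Triangle.mk wF (xi ≫ ι.map g) δ)
          (ι.map_distinguished _ hTM) hTF xr (ι.map echk)
          (by
            show ι.map g ≫ ι.map echk = (xr ≫ xi ≫ ι.map g)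
            rw [← ι.map_comp, ← hechk, ι.map_comp, ι.map_preimage, assoc])
        exact ⟨s, hs⟩
      have hθ : (σ ≫ π) ≫ wF = wF := by
        rw [assoc, ← hπ₁, ← assoc, ← hσ₁, assoc, hx, comp_id]
      -- the defect factors through (ι.obj A)⟦-1⟧
      obtain ⟨km, jm, hκm⟩ : ∃ (km : F ⟶ (ι.obj A)⟦(-1:ℤ)⟧)
          (jm : (ι.obj A)⟦(-1:ℤ)⟧ ⟶ F), 𝟙 F - σ ≫ π = km ≫ jm := by
        obtain ⟨y, hy⟩ := Triangle.coyoneda_exact₂ _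
          (inv_rot_of_distTriang _ hTF) (𝟙 F - σ ≫ π)
          (by
            show (𝟙 F - σ ≫ π) ≫ wF = 0
            rw [Preadditive.sub_comp, id_comp, hθ, sub_self])
        exact ⟨y, _, hy⟩
      -- ambient sum for F
      obtain ⟨S₁, inP, outA, retP, secA, hIR, hSO, hIO, hSR, hTot, hSle, hSge⟩ :=
        w.sum_exists P (A⟦(-1:ℤ)⟧)
      have isoA : ι.obj (A⟦(-1:ℤ)⟧) ≅ (ι.obj A)⟦(-1:ℤ)⟧ := (ι.commShiftIso (-1:ℤ)).app A
      have hFcomp : (σ ≫ ι.map inP + km ≫ isoA.inv ≫ ι.map secA) ≫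
          (ι.map retP ≫ π + ι.map outA ≫ isoA.hom ≫ jm) = 𝟙 F := by
        rw [Preadditive.add_comp, Preadditive.comp_add, Preadditive.comp_add]
        simp only [assoc]
        have T11 : σ ≫ ι.map inP ≫ ι.map retP ≫ π = σ ≫ π := by
          rw [← ι.map_comp_assoc inP retP, hIR, ι.map_id, id_comp]
        have T12 : σ ≫ ι.map inP ≫ ι.map outA ≫ isoA.hom ≫ jm = 0 := by
          rw [← ι.map_comp_assoc inP outA, hIO, ι.map_zero, zero_comp]
          simp only [comp_zero]
        have T21 : km ≫ isoA.inv ≫ ι.map secA ≫ ι.map retP ≫ π = 0 := by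
          rw [← ι.map_comp_assoc secA retP, hSR, ι.map_zero, zero_comp]
          simp only [comp_zero]
        have T22 : km ≫ isoA.inv ≫ ι.map secA ≫ ι.map outA ≫ isoA.hom ≫ jm =
            𝟙 F - σ ≫ π := by
          rw [← ι.map_comp_assoc secA outA, hSO, ι.map_id, id_comp, Iso.inv_hom_id_assoc]
          exact hκm.symm
        rw [T11, T12, T21, T22]
        abel
      -- IH applied to F with ambient S₁ of weights in [a+1, b]
      have hS₁ge : S₁⟦a+1⟧ ∈ ge :=
        hSge (a+1) (w.ge_anti (by omega) hP1)
          (w.ge_shift_shift (-1) (a+1) a (by ring) hAa)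
      have hS₁le : S₁⟦b⟧ ∈ le :=
        hSle b hPb (w.le_shift_shift (-1) b (b-1) (by ring)
          (w.le_mono (by omega : (0:ℤ) ≤ b-1) (w.le_shift_zero hA0)))
      obtain ⟨R, L₀, m, ϖ, ρ, hTIH, ⟨G, hG1, hGb, hRret⟩, ⟨Q₀, hQ₀, hLret⟩, P1F, P2F⟩ :=
        ih (a+1) b (by omega) hb S₁ hS₁ge hS₁le F
          (σ ≫ ι.map inP + km ≫ isoA.inv ≫ ι.map secA)
          (ι.map retP ≫ π + ι.map outA ≫ isoA.hom ≫ jm) hFcomp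
      -- the decomposition triangle of X'
      obtain ⟨W, uW, vW, hTW⟩ := distinguished_cocone_triangle (m ≫ wF)
      -- (P1)
      have P1 : ∀ (R₀ : C), R₀⟦(1:ℤ)⟧ ∈ ge → ∀ t : ι.obj R₀ ⟶ X',
          ∃ t', t = t' ≫ (m ≫ wF) := by
        intro R₀ hR₀ t
        have htu : t ≫ (xi ≫ ι.map g) = 0 := by
          have := ι_hom_zero w ι 1 hR₀ (by
            rw [show (1:ℤ)-1 = 0 by norm_num]
            exact w.le_shift_zero hA0) (t ≫ (xi ≫ ι.map g))
          exact this
        obtain ⟨t₁, ht₁⟩ := Triangle.coyoneda_exact₂ _ hTF t htu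
        obtain ⟨that, hthat⟩ := P1F R₀ hR₀ t₁
        exact ⟨that, by rw [ht₁, hthat]; exact assoc that m wF⟩
      -- (P2)
      have P2 : ∀ (R₁ : C), R₁⟦(2:ℤ)⟧ ∈ ge → ∀ t' : ι.obj R₁ ⟶ R,
          t' ≫ (m ≫ wF) = 0 → t' = 0 := by
        intro R₁ hR₁ t' ht'
        have htm : t' ≫ m = 0 := by
          obtain ⟨t₂, ht₂⟩ : ∃ t₂ : ι.obj R₁ ⟶ (ι.obj A)⟦(-1:ℤ)⟧,
              t' ≫ m = t₂ ≫ (Triangle.mk wF (xi ≫ ι.map g) δ).invRotate.mor₁ := by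
            obtain ⟨y, hy⟩ := Triangle.coyoneda_exact₂ _
              (inv_rot_of_distTriang _ hTF) (t' ≫ m)
              (by
                show (t' ≫ m) ≫ wF = 0
                rw [assoc]; exact ht')
            exact ⟨y, hy⟩
          have ht₂0 : t₂ = 0 := by
            have hz := ι_hom_zero w ι 2 hR₁ (by
              rw [show (2:ℤ)-1 = 1 by norm_num]
              exact w.le_shift_shift (-1) 1 0 (by ring) (w.le_shift_zero hA0))
              (t₂ ≫ isoA.inv)
            have : t₂ = (t₂ ≫ isoA.inv) ≫ isoA.hom := by simp
            rw [this, hz, zero_comp]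
          rw [ht₂, ht₂0]; exact zero_comp
        obtain ⟨t₃, ht₃⟩ : ∃ t₃ : ι.obj R₁ ⟶ L₀⟦(-1:ℤ)⟧,
            t' = t₃ ≫ (Triangle.mk m ϖ ρ).invRotate.mor₁ := by
          obtain ⟨y, hy⟩ := Triangle.coyoneda_exact₂ _
            (inv_rot_of_distTriang _ hTIH) t' (by show t' ≫ m = 0; exact htm)
          exact ⟨y, hy⟩
        obtain ⟨iL, rL, hiL⟩ := hLret
        have ht₃0 : t₃ = 0 := by
          have hz := ι_hom_zero w ι 2 hR₁ (by
            rw [show (2:ℤ)-1 = 1 by norm_num]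
            exact w.le_shift_shift (-1) 1 0 (by ring) (w.le_shift_zero hQ₀))
            (t₃ ≫ (shiftFunctor C' (-1:ℤ)).map iL ≫ ((ι.commShiftIso (-1:ℤ)).app Q₀).inv)
          have h1 : t₃ ≫ (shiftFunctor C' (-1:ℤ)).map iL = 0 := by
            have : t₃ ≫ (shiftFunctor C' (-1:ℤ)).map iL =
                (t₃ ≫ (shiftFunctor C' (-1:ℤ)).map iL ≫
                  ((ι.commShiftIso (-1:ℤ)).app Q₀).inv) ≫
                  ((ι.commShiftIso (-1:ℤ)).app Q₀).hom := by simp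
            rw [this, hz, zero_comp]
          calc t₃ = t₃ ≫ (shiftFunctor C' (-1:ℤ)).map (iL ≫ rL) := by
                rw [hiL, CategoryTheory.Functor.map_id, comp_id]
            _ = (t₃ ≫ (shiftFunctor C' (-1:ℤ)).map iL) ≫
                  (shiftFunctor C' (-1:ℤ)).map rL := by
                rw [Functor.map_comp, assoc]
            _ = 0 := by rw [h1, zero_comp]
        rw [ht₃, ht₃0]; exact zero_comp
      -- orthogonality property of W
      have hz12 : (m ≫ wF) ≫ uW = 0 := comp_distTriang_mor_zero₁₂ _ hTW
      have Worth : ∀ (R₀ : C), R₀⟦(1:ℤ)⟧ ∈ ge → ∀ t : ι.obj R₀ ⟶ W, t = 0 := by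
        intro R₀ hR₀ t
        have hv0 : vW ≫ (shiftFunctor C' (1:ℤ)).map (m ≫ wF) = 0 :=
          comp_distTriang_mor_zero₃₁ _ hTW
        have htv : t ≫ vW = 0 := by
          have hnat : (shiftFunctor C' (-1:ℤ)).map ((shiftFunctor C' (1:ℤ)).map (m ≫ wF)) ≫
              (shiftFunctorCompIsoId C' (1:ℤ) (-1:ℤ) (by ring)).hom.app X' =
              (shiftFunctorCompIsoId C' (1:ℤ) (-1:ℤ) (by ring)).hom.app R ≫ (m ≫ wF) := by
            have := (shiftFunctorCompIsoId C' (1:ℤ) (-1:ℤ) (by ring)).hom.naturality (m ≫ wF)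
            dsimp at this
            simpa using this
          have hχ : (((ι.commShiftIso (-1:ℤ)).app R₀).hom ≫
              (shiftFunctor C' (-1:ℤ)).map (t ≫ vW) ≫
              (shiftFunctorCompIsoId C' (1:ℤ) (-1:ℤ) (by ring)).hom.app R) ≫
              (m ≫ wF) = 0 := by
            simp only [assoc]
            rw [← hnat]
            rw [← Functor.map_comp_assoc]
            have hzz : (t ≫ vW) ≫ (shiftFunctor C' (1:ℤ)).map (m ≫ wF) = 0 := by
              rw [assoc, hv0, comp_zero]
            rw [hzz, Functor.map_zero, zero_comp, comp_zero]
          have hχ0 := P2 (R₀⟦(-1:ℤ)⟧)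
            (w.ge_shift_shift (-1) 2 1 (by ring) hR₀) _ hχ
          have hmz : (shiftFunctor C' (-1:ℤ)).map (t ≫ vW) = 0 := by
            rw [← cancel_epi ((ι.commShiftIso (-1:ℤ)).app R₀).hom,
              ← cancel_mono ((shiftFunctorCompIsoId C' (1:ℤ) (-1:ℤ) (by ring)).hom.app R)]
            simp only [assoc, zero_comp, comp_zero]
            simpa only [assoc] using hχ0
          rwa [(shiftFunctor C' (-1:ℤ)).map_eq_zero_iff] at hmz
        obtain ⟨t₅, ht₅⟩ : ∃ t₅ : ι.obj R₀ ⟶ X', t = t₅ ≫ uW := by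
          obtain ⟨y, hy⟩ := Triangle.coyoneda_exact₃ _ hTW t htv
          exact ⟨y, hy⟩
        obtain ⟨that, hthat⟩ := P1 R₀ hR₀ t₅
        rw [ht₅, hthat, assoc, hz12, comp_zero]
      -- the comparison of W with the cone of ψ in C
      obtain ⟨iR, rR, hiR⟩ := hRret
      obtain ⟨Kψ, gψ, hψ, hTψ⟩ := distinguished_cocone_triangle
        (ι.preimage (rR ≫ (m ≫ wF) ≫ xi))
      obtain ⟨tA, htA₂, htA₃⟩ : ∃ tA : W ⟶ ι.obj Kψ,
          uW ≫ tA = xi ≫ ι.map gψ ∧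
          vW ≫ (shiftFunctor C' (1:ℤ)).map iR =
            tA ≫ (ι.map hψ ≫ (ι.commShiftIso (1:ℤ)).hom.app G) := by
        obtain ⟨c', h1, h2⟩ := complete_distinguished_triangle_morphism
          (Triangle.mk (m ≫ wF) uW vW)
          (ι.mapTriangle.obj (Triangle.mk (ι.preimage (rR ≫ (m ≫ wF) ≫ xi)) gψ hψ))
          hTW (ι.map_distinguished _ hTψ) iR xi
          (by
            show (m ≫ wF) ≫ xi = iR ≫ ι.map (ι.preimage (rR ≫ (m ≫ wF) ≫ xi))
            rw [ι.map_preimage, reassoc_of% hiR])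
        exact ⟨c', h1, h2⟩
      obtain ⟨tB, htB₂, htB₃⟩ : ∃ tB : ι.obj Kψ ⟶ W,
          ι.map gψ ≫ tB = xr ≫ uW ∧
          (ι.map hψ ≫ (ι.commShiftIso (1:ℤ)).hom.app G) ≫ (shiftFunctor C' (1:ℤ)).map rR =
            tB ≫ vW := by
        obtain ⟨c', h1, h2⟩ := complete_distinguished_triangle_morphism
          (ι.mapTriangle.obj (Triangle.mk (ι.preimage (rR ≫ (m ≫ wF) ≫ xi)) gψ hψ))
          (Triangle.mk (m ≫ wF) uW vW)
          (ι.map_distinguished _ hTψ) hTW rR xr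
          (by
            show ι.map (ι.preimage (rR ≫ (m ≫ wF) ≫ xi)) ≫ xr = rR ≫ (m ≫ wF)
            rw [ι.map_preimage]
            simp only [assoc]
            rw [hx, comp_id])
        exact ⟨c', h1, h2⟩
      have huθ : uW ≫ tA ≫ tB = uW := by
        rw [← assoc, htA₂, assoc, htB₂, ← assoc, hx, id_comp]
      have hθv : (tA ≫ tB) ≫ vW = vW := by
        rw [assoc, ← htB₃, ← assoc, ← htA₃, assoc, ← Functor.map_comp, hiR,
          CategoryTheory.Functor.map_id, comp_id]
      obtain ⟨lam, hlam⟩ : ∃ lam : R⟦(1:ℤ)⟧ ⟶ W, tA ≫ tB - 𝟙 W = vW ≫ lam := by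
        obtain ⟨y, hy⟩ := Triangle.yoneda_exact₃ _ hTW (tA ≫ tB - 𝟙 W)
          (by
            show uW ≫ (tA ≫ tB - 𝟙 W) = 0
            rw [Preadditive.comp_sub, comp_id, ← assoc]
            rw [assoc, huθ, sub_self])
        exact ⟨y, hy⟩
      have hΔv : (tA ≫ tB - 𝟙 W) ≫ vW = 0 := by
        rw [Preadditive.sub_comp, hθv, id_comp, sub_self]
      have hΔΔ : (tA ≫ tB - 𝟙 W) ≫ (tA ≫ tB - 𝟙 W) = 0 := by
        nth_rewrite 2 [hlam]
        rw [← assoc, hΔv, zero_comp]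
      have key : ∀ (D : W ⟶ W), D ≫ D = 0 → (𝟙 W + D) ≫ (𝟙 W - D) = 𝟙 W := by
        intro D hD
        rw [Preadditive.add_comp, id_comp, Preadditive.comp_sub, comp_id, hD, sub_zero]
        abel
      have hWret : tA ≫ (tB ≫ (𝟙 W - (tA ≫ tB - 𝟙 W))) = 𝟙 W := by
        rw [← assoc]
        generalize hΔg : tA ≫ tB - 𝟙 W = D
        rw [hΔg] at hΔΔ
        have hid : tA ≫ tB = 𝟙 W + D := by rw [← hΔg]; abel
        rw [hid]
        exact key D hΔΔ
      -- bounds for Kψ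
      have hKle : Kψ⟦b⟧ ∈ le := by
        refine w.le_ext (Triangle.mk (ι.preimage (rR ≫ (m ≫ wF) ≫ xi)) gψ hψ).rotate
          (rot_of_distTriang _ hTψ) b hMb ?_
        exact w.le_shift_shift 1 b (1+b) (by ring) (w.le_mono (by omega : b ≤ 1+b) hGb)
      have hKge : Kψ⟦a⟧ ∈ ge := by
        refine w.ge_ext (Triangle.mk (ι.preimage (rR ≫ (m ≫ wF) ≫ xi)) gψ hψ).rotate
          (rot_of_distTriang _ hTψ) a hMa ?_
        exact w.ge_shift_shift 1 a (1+a) (by ring) (w.ge_anti (by omega : 1+a ≤ 1) hG1)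
      -- shrink W
      obtain ⟨Q, hQle, _, hWQ⟩ := shrink w ι a (by omega) b.toNat Kψ
        (by rw [show ((b.toNat:ℕ):ℤ) = b by omega]; exact hKle) hKge W
        tA (tB ≫ (𝟙 W - (tA ≫ tB - 𝟙 W))) hWret Worth
      exact ⟨R, W, m ≫ wF, uW, vW, hTW, ⟨G, hG1, hGb, ⟨iR, rR, hiR⟩⟩,
        ⟨Q, hQle, hWQ⟩, P1, P2⟩

end Transfer

variable {C : Type*} [Category C] [HasZeroObject C] [HasShift C ℤ]
  [Preadditive C] [∀ n : ℤ, (shiftFunctor C n).Additive] [Pretriangulated C]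
variable {C' : Type*} [Category C'] [HasZeroObject C'] [HasShift C' ℤ]
  [Preadditive C'] [∀ n : ℤ, (shiftFunctor C' n).Additive] [Pretriangulated C']

/-- Let `w` be a bounded weight structure on `C`, and let `ι : C ⥤ C'` realize the
idempotent completion of `C` as a triangulated category (`C'` is idempotent complete,
`ι` is exact and fully faithful, and every object of `C'` is a retract of an object
coming from `C`). Then `w` extends to a bounded weight structure `w'` on `C'` such
that `ι` is weight-exact, and the heart of `w'` is the idempotent completion
(retract-closure) of the heart of `w`. -/
theorem weightStructure_extends_to_idempotent_completion
    (le ge : Set C) (w : IsWeightStructure C le ge)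
    (hbdd : ∀ M : C, (∃ i : ℤ, M⟦i⟧ ∈ le) ∧ (∃ j : ℤ, M⟦j⟧ ∈ ge))
    [IsIdempotentComplete C']
    (ι : C ⥤ C') [ι.CommShift ℤ] [ι.IsTriangulated] [ι.Full] [ι.Faithful]
    (hdense : ∀ Y : C', ∃ X : C, IsRetract Y (ι.obj X)) :
    ∃ le' ge' : Set C', IsWeightStructure C' le' ge' ∧
      (∀ M : C', (∃ i : ℤ, M⟦i⟧ ∈ le') ∧ (∃ j : ℤ, M⟦j⟧ ∈ ge')) ∧
      (∀ X ∈ le, ι.obj X ∈ le') ∧ (∀ X ∈ ge, ι.obj X ∈ ge') ∧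
      le' ∩ ge' = {Y : C' | ∃ X : C, X ∈ le ∩ ge ∧ IsRetract Y (ι.obj X)} := by

  refine ⟨{Y : C' | ∃ Q : C, Q ∈ le ∧ IsRetract Y (ι.obj Q)},
    {Y : C' | ∃ G : C, G ∈ ge ∧ IsRetract Y (ι.obj G)}, ⟨?_, ?_, ?_, ?_, ?_, ?_⟩,
    ?_, ?_, ?_, ?_⟩
  · -- le'_retract
    rintro X Y ⟨Q, hQ, hr⟩ hXY
    exact ⟨Q, hQ, hXY.trans' hr⟩
  · -- ge'_retract
    rintro X Y ⟨G, hG, hr⟩ hXY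
    exact ⟨G, hG, hXY.trans' hr⟩
  · -- le'_shift
    rintro X ⟨Q, hQ, hr⟩
    exact ⟨Q⟦(1:ℤ)⟧, w.le_shift hQ, isRetract_ι_shift w ι 1 hr⟩
  · -- ge'_shift
    rintro X ⟨G, hG, hr⟩
    exact ⟨G⟦(-1:ℤ)⟧, w.ge_shift hG, isRetract_ι_shift w ι (-1) hr⟩
  · -- orthogonality
    rintro X Y ⟨G, hG, i₁, r₁, h₁⟩ ⟨Q, hQ, i₂, r₂, h₂⟩ f
    have hmid : r₁ ≫ f ≫ (shiftFunctor C' (1:ℤ)).map i₂ ≫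
        ((ι.commShiftIso (1:ℤ)).app Q).inv = 0 := by
      refine ι_hom_zero w ι 0 (w.ge_shift_zero hG) ?_ _
      rw [show (0:ℤ)-1 = -1 by norm_num]
      exact w.le_shift_shift 1 (-1) 0 (by ring) (w.le_shift_zero hQ)
    have key : f = i₁ ≫ (r₁ ≫ f ≫ (shiftFunctor C' (1:ℤ)).map i₂ ≫
        ((ι.commShiftIso (1:ℤ)).app Q).inv) ≫ ((ι.commShiftIso (1:ℤ)).app Q).hom ≫
        (shiftFunctor C' (1:ℤ)).map r₂ := by
      simp only [assoc, Iso.inv_hom_id_assoc, ← Functor.map_comp]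
      rw [h₂, CategoryTheory.Functor.map_id, comp_id, ← assoc, h₁, id_comp]
    rw [key, hmid, zero_comp, comp_zero]
  · -- decompositions
    intro M'
    obtain ⟨M₀, xi, xr, hx⟩ := hdense M'
    obtain ⟨⟨b₀, hb₀⟩, ⟨a, ha⟩⟩ := hbdd M₀
    have hble : M₀⟦max b₀ 1⟧ ∈ le := w.le_mono (le_max_left _ _) hb₀
    obtain ⟨R, W, c, u, v, hT, ⟨G, hG1, _, hRret⟩, ⟨Q, hQ, hWret⟩, _, _⟩ :=
      master w ι (1 - a).toNat a (max b₀ 1) (by omega) (le_max_right _ _)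
        M₀ ha hble M' xi xr hx
    exact ⟨W, R⟦(1:ℤ)⟧, ⟨Q, hQ, hWret⟩,
      ⟨G⟦(1:ℤ)⟧, hG1, isRetract_ι_shift w ι 1 hRret⟩, u, v,
      (Triangle.mk c u v).rotate.mor₃, rot_of_distTriang _ hT⟩
  · -- boundedness
    intro M'
    obtain ⟨M₀, hr⟩ := hdense M'
    obtain ⟨⟨i, hi⟩, ⟨j, hj⟩⟩ := hbdd M₀
    exact ⟨⟨i, ⟨M₀⟦i⟧, hi, isRetract_ι_shift w ι i hr⟩⟩,
      ⟨j, ⟨M₀⟦j⟧, hj, isRetract_ι_shift w ι j hr⟩⟩⟩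
  · -- weight-exactness (le side)
    intro X hX
    exact ⟨X, hX, ⟨𝟙 _, 𝟙 _, by simp⟩⟩
  · -- weight-exactness (ge side)
    intro X hX
    exact ⟨X, hX, ⟨𝟙 _, 𝟙 _, by simp⟩⟩
  · -- the heart
    ext Y
    constructor
    · rintro ⟨⟨Q, hQ, iQ, rQ, hiQ⟩, ⟨G, hG, iG, rG, hiG⟩⟩
      have horth : ∀ (R₀ : C), R₀⟦(1:ℤ)⟧ ∈ ge → ∀ t : ι.obj R₀ ⟶ Y, t = 0 := by
        intro R₀ hR₀ t
        have h1 : t ≫ iQ = 0 := by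
          refine ι_hom_zero w ι 1 hR₀ ?_ _
          rw [show (1:ℤ)-1 = 0 by norm_num]
          exact w.le_shift_zero hQ
        calc t = t ≫ (iQ ≫ rQ) := by rw [hiQ, comp_id]
          _ = (t ≫ iQ) ≫ rQ := by rw [assoc]
          _ = 0 := by rw [h1, zero_comp]
      obtain ⟨b₁, hb₁⟩ := (hbdd G).1
      have hble : G⟦max b₁ 0⟧ ∈ le := w.le_mono (le_max_left _ _) hb₁
      obtain ⟨Q₂, hQ₂le, hQ₂ge, hYret⟩ := shrink w ι 0 le_rfl (max b₁ 0).toNat G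
        (by rw [show (((max b₁ 0).toNat : ℕ):ℤ) = max b₁ 0 by omega]; exact hble)
        (w.ge_shift_zero hG) Y iG rG hiG horth
      exact ⟨Q₂, ⟨hQ₂le, w.ge_of_shift_zero hQ₂ge⟩, hYret⟩
    · rintro ⟨X, ⟨hXle, hXge⟩, hr⟩
      exact ⟨⟨X, hXle, hr⟩, ⟨X, hXge, hr⟩⟩
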